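/- arXiv:1809.02852 — 3 statements merged into one kernel-verified Lean document; each statement's English description precedes it below -/
import Mathlib

section
/- The function f(y|θ) = δ^{1/θ₂} / (2^{1/θ₂} Γ(1 + 1/θ₂)) · exp(-(1/2)·(δ/A(y))·|y|^{θ₂}), where δ = 2θ₁^{θ₂}(1-θ₁)^{θ₂}/(θ₁^{θ₂}+(1-θ₁)^{θ₂}) and A(y) = [1/2 + sign(y)(1/2 - θ₁)]^{θ₂}, is a probability density function on ℝ, i.e., it is nonnegative and its integral over ℝ equals 1. -/
open MeasureTheory Real

noncomputable def apdDelta (t1 t2 : ℝ) : ℝ :=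
  2 * t1 ^ t2 * (1 - t1) ^ t2 / (t1 ^ t2 + (1 - t1) ^ t2)

noncomputable def apdA (t1 t2 y : ℝ) : ℝ :=
  (1 / 2 + Real.sign y * (1 / 2 - t1)) ^ t2

noncomputable def apdDensity (t1 t2 y : ℝ) : ℝ :=
  apdDelta t1 t2 ^ (1 / t2) / ((2 : ℝ) ^ (1 / t2) * Real.Gamma (1 + 1 / t2)) *
    Real.exp (-(1 / 2) * (apdDelta t1 t2 / apdA t1 t2 y) * |y| ^ t2)

open Set in
lemma apd_integrableOn_exp_neg_mul_rpow {p b : ℝ} (hp : 0 < p) (hb : 0 < b) :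
    IntegrableOn (fun x : ℝ => Real.exp (-b * x ^ p)) (Set.Ioi 0) := by
  rw [← integrableOn_Ioi_comp_rpow_iff' (fun x : ℝ => Real.exp (-b * x ^ p))
    (p := 1 / p) (one_div_ne_zero hp.ne')]
  have h : (-1 : ℝ) < 1 / p - 1 := by
    have : 0 < 1 / p := by positivity
    linarith
  refine (integrableOn_rpow_mul_exp_neg_mul_rpow h one_pos hb).congr_fun
    (fun x hx => ?_) measurableSet_Ioi
  have hx0 : (0 : ℝ) < x := hx
  rw [smul_eq_mul, ← Real.rpow_mul hx0.le, one_div_mul_cancel hp.ne', Real.rpow_one]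
  simp only [Real.rpow_one]

open Set in
lemma apd_integrableOn_comp_neg_Iic {f : ℝ → ℝ} (hf : IntegrableOn f (Set.Ioi (0 : ℝ))) :
    IntegrableOn (fun x => f (-x)) (Set.Iic (0 : ℝ)) := by
  have A : MeasurableEmbedding fun x : ℝ => -x :=
    (Homeomorph.neg ℝ).isClosedEmbedding.measurableEmbedding
  have h1 : IntegrableOn f (Ici (0 : ℝ)) := Iff.mpr integrableOn_Ici_iff_integrableOn_Ioi hf
  have h2 : (volume : Measure ℝ).restrict (Ici (0 : ℝ)) =
      ((volume : Measure ℝ).restrict (Iic (0 : ℝ))).map (fun x : ℝ => -x) := by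
    calc (volume : Measure ℝ).restrict (Ici (0 : ℝ))
        = ((volume : Measure ℝ).map (fun x : ℝ => -x)).restrict (Ici (0 : ℝ)) := by
          rw [Measure.map_neg_eq_self]
      _ = ((volume : Measure ℝ).restrict ((fun x : ℝ => -x) ⁻¹' Ici (0 : ℝ))).map
            (fun x : ℝ => -x) := Measure.restrict_map A.measurable measurableSet_Ici
      _ = ((volume : Measure ℝ).restrict (Iic (0 : ℝ))).map (fun x : ℝ => -x) := by
          congr 1
          ext x
          simp
  rw [IntegrableOn, h2, A.integrable_map_iff] at h1
  exact h1

theorem apd_isProbabilityDensity (t1 t2 : ℝ) (h1 : t1 ∈ Set.Ioo (0 : ℝ) 1) (h2 : 0 < t2) :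
    (∀ y : ℝ, 0 ≤ apdDensity t1 t2 y) ∧ ∫ y : ℝ, apdDensity t1 t2 y = 1 := by
  obtain ⟨ht1, ht1'⟩ := h1
  have h1t : (0 : ℝ) < 1 - t1 := by linarith
  have hA : (0 : ℝ) < t1 ^ t2 := Real.rpow_pos_of_pos ht1 t2
  have hB : (0 : ℝ) < (1 - t1) ^ t2 := Real.rpow_pos_of_pos h1t t2
  have hδ : 0 < apdDelta t1 t2 := by
    unfold apdDelta; positivity
  have hΓ : 0 < Real.Gamma (1 + 1 / t2) := Real.Gamma_pos_of_pos (by positivity)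
  set δ := apdDelta t1 t2 with hδdef
  set C := δ ^ (1 / t2) / ((2 : ℝ) ^ (1 / t2) * Real.Gamma (1 + 1 / t2)) with hC
  have hCpos : 0 < C := by
    apply div_pos (Real.rpow_pos_of_pos hδ _)
    positivity
  have hcm : 0 < δ / (2 * t1 ^ t2) := by positivity
  have hcp : 0 < δ / (2 * (1 - t1) ^ t2) := by positivity
  -- pointwise formulas
  have keyP : ∀ y ∈ Set.Ioi (0 : ℝ), apdDensity t1 t2 y =
      C * Real.exp (-(δ / (2 * (1 - t1) ^ t2)) * y ^ t2) := by
    intro y hy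
    have hy0 : (0 : ℝ) < y := hy
    unfold apdDensity apdA
    rw [Real.sign_of_pos hy0, abs_of_pos hy0, ← hδdef, ← hC]
    congr 2
    have : (1 / 2 + 1 * (1 / 2 - t1)) = 1 - t1 := by ring
    rw [this]
    ring
  have keyN : ∀ y ∈ Set.Iic (0 : ℝ), apdDensity t1 t2 y =
      C * Real.exp (-(δ / (2 * t1 ^ t2)) * (-y) ^ t2) := by
    intro y hy
    have hy' : y ≤ 0 := hy
    rcases hy'.lt_or_eq with hy0 | hy0
    · unfold apdDensity apdA
      rw [Real.sign_of_neg hy0, abs_of_neg hy0, ← hδdef, ← hC]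
      congr 2
      have : (1 / 2 + (-1) * (1 / 2 - t1)) = t1 := by ring
      rw [this]
      ring
    · subst hy0
      unfold apdDensity apdA
      rw [← hδdef, ← hC]
      simp [Real.zero_rpow h2.ne']
  -- integrability
  have hip : IntegrableOn (apdDensity t1 t2) (Set.Ioi (0 : ℝ)) := by
    exact IntegrableOn.congr_fun ((apd_integrableOn_exp_neg_mul_rpow h2 hcp).const_mul C)
      (fun y hy => (keyP y hy).symm) measurableSet_Ioi
  have hin : IntegrableOn (apdDensity t1 t2) (Set.Iic (0 : ℝ)) := by
    exact IntegrableOn.congr_fun (apd_integrableOn_comp_neg_Iic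
      ((apd_integrableOn_exp_neg_mul_rpow h2 hcm).const_mul C))
      (fun y hy => (keyN y hy).symm) measurableSet_Iic
  have hint : Integrable (apdDensity t1 t2) := by
    rw [← integrableOn_univ, ← Set.Iic_union_Ioi (a := (0 : ℝ))]
    exact hin.union hip
  constructor
  · intro y
    unfold apdDensity
    exact mul_nonneg (div_nonneg (Real.rpow_nonneg hδ.le _) (by positivity)) (Real.exp_pos _).le
  · have split := integral_add_compl (measurableSet_Iic (a := (0 : ℝ))) hint (μ := volume)
    rw [Set.compl_Iic] at split
    rw [← split]
    have eN : ∫ y in Set.Iic (0 : ℝ), apdDensity t1 t2 y =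
        C * ((δ / (2 * t1 ^ t2)) ^ (-1 / t2) * Real.Gamma (1 / t2 + 1)) := by
      rw [setIntegral_congr_fun measurableSet_Iic (fun y hy => keyN y hy)]
      have := integral_comp_neg_Iic (0 : ℝ)
        (fun x : ℝ => C * Real.exp (-(δ / (2 * t1 ^ t2)) * x ^ t2))
      rw [neg_zero] at this
      rw [this, MeasureTheory.integral_const_mul]
      congr 1
      simpa using integral_exp_neg_mul_rpow h2 hcm
    have eP : ∫ y in Set.Ioi (0 : ℝ), apdDensity t1 t2 y =
        C * ((δ / (2 * (1 - t1) ^ t2)) ^ (-1 / t2) * Real.Gamma (1 / t2 + 1)) := by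
      rw [setIntegral_congr_fun measurableSet_Ioi (fun y hy => keyP y hy),
        MeasureTheory.integral_const_mul]
      congr 1
      simpa using integral_exp_neg_mul_rpow h2 hcp
    rw [eN, eP]
    have hpow : ∀ a : ℝ, 0 < a → (δ / (2 * a ^ t2)) ^ (-1 / t2)
        = (δ ^ (1 / t2))⁻¹ * ((2 : ℝ) ^ (1 / t2) * a) := by
      intro a ha
      rw [neg_div, Real.rpow_neg (by positivity), Real.div_rpow hδ.le (by positivity),
        Real.mul_rpow (by norm_num) (Real.rpow_nonneg ha.le _),
        ← Real.rpow_mul ha.le, mul_one_div_cancel h2.ne', Real.rpow_one]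
      rw [inv_div]
      field_simp
    rw [hpow t1 ht1, hpow (1 - t1) h1t]
    have hΓ' : Real.Gamma (1 / t2 + 1) = Real.Gamma (1 + 1 / t2) := by rw [add_comm]
    rw [hΓ', hC]
    have hX : (0 : ℝ) < δ ^ (1 / t2) := Real.rpow_pos_of_pos hδ _
    have hY : (0 : ℝ) < (2 : ℝ) ^ (1 / t2) := by positivity
    field_simp
    ring
end

section
/- Let λ ≥ 1 and β = 1 + 1/λ. Then β·ψ'(β) - 1 > 0, and 4(1+λ) - 4λ/(Γ(3-β)Γ(β)) > 0; consequently the diagonal matrix Σ = diag(4(1+λ) - 4λ/(Γ(3-β)Γ(β)), (βψ'(β)-1)/λ³) is positive definite. -/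
open MeasureTheory Real

/-- The digamma function `ψ(x) = (log ∘ Γ)'(x)`. -/
noncomputable def digamma (x : ℝ) : ℝ :=
  deriv (fun y : ℝ => Real.log (Real.Gamma y)) x

/-- The trigamma function `ψ'`. -/
noncomputable def trigamma (x : ℝ) : ℝ :=
  deriv digamma x

section Aux

open Set Filter Topology

theorem analyticAt_logGamma {x : ℝ} (hx : 0 < x) :
    AnalyticAt ℝ (fun y : ℝ => Real.log (Real.Gamma y)) x := by
  have hG : AnalyticAt ℂ (fun z : ℂ => Complex.log (Complex.Gamma z)) x := by
    have hopen : IsOpen {z : ℂ | 0 < z.re} := isOpen_lt continuous_const Complex.continuous_re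
    have hd : DifferentiableOn ℂ Complex.Gamma {z : ℂ | 0 < z.re} := by
      intro z hz
      refine (Complex.differentiableAt_Gamma z fun m => ?_).differentiableWithinAt
      intro h
      rw [h] at hz
      simp only [Set.mem_setOf_eq, Complex.neg_re, Complex.natCast_re] at hz
      have : (0:ℝ) ≤ (m:ℝ) := Nat.cast_nonneg m
      linarith
    have hGa : AnalyticAt ℂ Complex.Gamma x :=
      hd.analyticAt (hopen.mem_nhds (by simpa using hx))
    exact hGa.clog (by
      rw [Complex.Gamma_ofReal]
      exact Complex.ofReal_mem_slitPlane.2 (Real.Gamma_pos_of_pos hx))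
  have h1 : AnalyticAt ℝ (fun y : ℝ => (Complex.log (Complex.Gamma (y : ℂ))).re) x :=
    (Complex.reCLM.analyticAt _).comp ((hG.restrictScalars).comp (Complex.ofRealCLM.analyticAt _))
  apply h1.congr
  filter_upwards [eventually_gt_nhds hx] with y hy
  rw [Complex.Gamma_ofReal, ← Complex.ofReal_log (Real.Gamma_pos_of_pos hy).le, Complex.ofReal_re]

theorem analyticOnNhd_digamma : AnalyticOnNhd ℝ digamma (Ioi 0) := by
  have h : AnalyticOnNhd ℝ (fun y : ℝ => Real.log (Real.Gamma y)) (Ioi 0) :=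
    fun x hx => analyticAt_logGamma hx
  exact h.deriv

theorem differentiableAt_digamma {x : ℝ} (hx : 0 < x) : DifferentiableAt ℝ digamma x :=
  (analyticOnNhd_digamma x hx).differentiableAt

theorem diffAt_logGamma {x : ℝ} (hx : 0 < x) :
    DifferentiableAt ℝ (fun y : ℝ => Real.log (Real.Gamma y)) x := by
  refine ((Real.differentiableAt_Gamma ?_).log (Real.Gamma_ne_zero ?_)) <;>
    exact fun m => ne_of_gt (by have : (0:ℝ) ≤ m := Nat.cast_nonneg m; linarith)

theorem digamma_add_one {x : ℝ} (hx : 0 < x) : digamma (x + 1) = digamma x + 1 / x := by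
  unfold digamma
  rw [← deriv_comp_add_const, one_div, ← Real.deriv_log,
    ← deriv_fun_add (diffAt_logGamma hx) (Real.differentiableAt_log hx.ne')]
  apply Filter.EventuallyEq.deriv_eq
  filter_upwards [eventually_gt_nhds hx] with y hy
  rw [Real.Gamma_add_one hy.ne', Real.log_mul hy.ne' (Real.Gamma_pos_of_pos hy).ne', add_comm]

theorem trigamma_add_one {x : ℝ} (hx : 0 < x) :
    trigamma (x + 1) = trigamma x - 1 / x ^ 2 := by
  unfold trigamma
  rw [← deriv_comp_add_const]
  have h : (fun y => digamma (y + 1)) =ᶠ[𝓝 x] fun y => digamma y + 1 / y := by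
    filter_upwards [eventually_gt_nhds hx] with y hy using digamma_add_one hy
  simp only [one_div] at h ⊢
  rw [h.deriv_eq, deriv_fun_add (differentiableAt_digamma hx)
    (differentiableAt_inv hx.ne'), deriv_inv]
  ring

theorem digamma_monotoneOn : MonotoneOn digamma (Ioi 0) := by
  intro a ha b hb hab
  rcases eq_or_lt_of_le hab with rfl | hab
  · exact le_refl _
  have hc : ConvexOn ℝ (Ioi 0) (Real.log ∘ Real.Gamma) := Real.convexOn_log_Gamma
  have e : digamma = deriv (Real.log ∘ Real.Gamma) := rfl
  rw [e]
  calc deriv (Real.log ∘ Real.Gamma) a ≤ slope (Real.log ∘ Real.Gamma) a b :=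
        hc.deriv_le_slope ha hb hab (diffAt_logGamma ha)
    _ ≤ deriv (Real.log ∘ Real.Gamma) b := hc.slope_le_deriv ha hb hab (diffAt_logGamma hb)

theorem trigamma_nonneg {x : ℝ} (hx : 0 < x) : 0 ≤ trigamma x := by
  have hd := (differentiableAt_digamma hx).hasDerivAt
  have ht : Tendsto (slope digamma x) (𝓝[>] x) (𝓝 (trigamma x)) :=
    (hasDerivAt_iff_tendsto_slope.mp hd).mono_left
      (nhdsWithin_mono _ fun y hy => ne_of_gt hy)
  refine ge_of_tendsto ht ?_
  filter_upwards [self_mem_nhdsWithin, eventually_nhdsWithin_of_eventually_nhds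
    (eventually_gt_nhds hx)] with y hy hy'
  have := digamma_monotoneOn (mem_Ioi.2 hx) (mem_Ioi.2 hy') (le_of_lt hy)
  rw [slope_def_field]
  exact div_nonneg (by linarith) (by linarith [mem_Ioi.1 hy])

theorem trigamma_ge (n : ℕ) : ∀ x : ℝ, 0 < x → 1 / x - 1 / (x + n) ≤ trigamma x := by
  induction n with
  | zero => intro x hx; simpa using trigamma_nonneg hx
  | succ n ih =>
    intro x hx
    have h1 : trigamma x = 1 / x ^ 2 + trigamma (x + 1) := by
      rw [trigamma_add_one hx]; ring
    have h2 := ih (x + 1) (by linarith)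
    have h3 : 1 / x - 1 / (x + 1) ≤ 1 / x ^ 2 := by
      rw [div_sub_div _ _ hx.ne' (by linarith : x + 1 ≠ 0)]
      rw [div_le_div_iff₀ (by positivity) (by positivity)]
      nlinarith
    have hr : (x + 1 + (n:ℝ)) = x + ((n:ℝ) + 1) := by ring
    push_cast
    rw [h1]
    rw [hr] at h2
    linarith

theorem part1 {b : ℝ} (hb1 : 1 < b) (hb2 : b ≤ 2) : 0 < b * trigamma b - 1 := by
  have h0 : (0:ℝ) < b := by linarith
  have h1 : trigamma b = 1 / b ^ 2 + trigamma (b + 1) := by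
    rw [trigamma_add_one h0]; ring
  have h2 := trigamma_ge 12 (b + 1) (by linarith)
  push_cast at h2
  rw [show b + 1 + 12 = b + 13 by ring] at h2
  have hb3 : trigamma b ≥ 1 / b ^ 2 + (1 / (b + 1) - 1 / (b + 13)) := by
    rw [h1]; linarith [h2]
  have e1 : (0:ℝ) < b + 1 := by linarith
  have e2 : (0:ℝ) < b + 13 := by linarith
  have key : 1 / (b * (b + 1)) - b / (b + 13) > 0 := by
    rw [gt_iff_lt, sub_pos, div_lt_div_iff₀ e2 (by positivity)]
    nlinarith
  have expand : b * (1 / b ^ 2 + (1 / (b + 1) - 1 / (b + 13))) - 1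
      = 1 / (b * (b + 1)) - b / (b + 13) := by
    field_simp
    ring
  nlinarith [mul_le_mul_of_nonneg_left hb3 h0.le]

theorem sin_ge_sub_cube' {t : ℝ} (ht : 0 ≤ t) : t - t ^ 3 / 6 ≤ Real.sin t := by
  have hd : ∀ x : ℝ, HasDerivAt (fun t : ℝ => Real.sin t - (t - t ^ 3 / 6))
      (Real.cos x - (1 - 3 * x ^ 2 / 6)) x := fun x =>
    (Real.hasDerivAt_sin x).sub ((hasDerivAt_id x).sub (((hasDerivAt_pow 3 x)).div_const 6))
  have key : MonotoneOn (fun t : ℝ => Real.sin t - (t - t ^ 3 / 6)) (Ici 0) := by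
    refine monotoneOn_of_deriv_nonneg (convex_Ici 0)
      (fun x _ => (hd x).continuousAt.continuousWithinAt)
      (fun x _ => (hd x).differentiableAt.differentiableWithinAt) ?_
    intro x hx
    rw [(hd x).deriv, sub_nonneg]
    calc 1 - 3 * x ^ 2 / 6 = 1 - x ^ 2 / 2 := by ring
      _ ≤ Real.cos x := Real.one_sub_sq_div_two_le_cos
  have := key self_mem_Ici (mem_Ici.2 ht) ht
  simpa using this

theorem cos_le_quad {t : ℝ} (ht : 0 ≤ t) : Real.cos t ≤ 1 - t ^ 2 / 2 + t ^ 4 / 24 := by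
  have hd : ∀ x : ℝ, HasDerivAt (fun t : ℝ => 1 - t ^ 2 / 2 + t ^ 4 / 24 - Real.cos t)
      (0 - 2 * x ^ 1 / 2 + 4 * x ^ 3 / 24 - -Real.sin x) x := fun x =>
    (((hasDerivAt_const x 1).sub ((hasDerivAt_pow 2 x).div_const 2)).add
      ((hasDerivAt_pow 4 x).div_const 24)).sub (Real.hasDerivAt_cos x)
  have key : MonotoneOn (fun t : ℝ => 1 - t ^ 2 / 2 + t ^ 4 / 24 - Real.cos t) (Ici 0) := by
    refine monotoneOn_of_deriv_nonneg (convex_Ici 0)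
      (fun x _ => (hd x).continuousAt.continuousWithinAt)
      (fun x _ => (hd x).differentiableAt.differentiableWithinAt) ?_
    intro x hx
    have hx0 : 0 ≤ x := le_of_lt (by simpa using hx)
    rw [(hd x).deriv]
    have := sin_ge_sub_cube' hx0
    nlinarith
  have := key self_mem_Ici (mem_Ici.2 ht) ht
  simp only [Real.cos_zero] at this
  linarith [this]

theorem sin_le_quintic {t : ℝ} (ht : 0 ≤ t) :
    Real.sin t ≤ t - t ^ 3 / 6 + t ^ 5 / 120 := by
  have hd : ∀ x : ℝ, HasDerivAt (fun t : ℝ => t - t ^ 3 / 6 + t ^ 5 / 120 - Real.sin t)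
      (1 - 3 * x ^ 2 / 6 + 5 * x ^ 4 / 120 - Real.cos x) x := fun x =>
    (((hasDerivAt_id x).sub ((hasDerivAt_pow 3 x).div_const 6)).add
      ((hasDerivAt_pow 5 x).div_const 120)).sub (Real.hasDerivAt_sin x)
  have key : MonotoneOn (fun t : ℝ => t - t ^ 3 / 6 + t ^ 5 / 120 - Real.sin t) (Ici 0) := by
    refine monotoneOn_of_deriv_nonneg (convex_Ici 0)
      (fun x _ => (hd x).continuousAt.continuousWithinAt)
      (fun x _ => (hd x).differentiableAt.differentiableWithinAt) ?_
    intro x hx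
    have hx0 : 0 ≤ x := le_of_lt (by simpa using hx)
    rw [(hd x).deriv]
    have := cos_le_quad hx0
    nlinarith
  have := key self_mem_Ici (mem_Ici.2 ht) ht
  simp only [Real.sin_zero] at this
  linarith [this]

theorem sin_pi_mul_lt {x : ℝ} (hx : 0 < x) (hx1 : x < 1) :
    Real.sin (π * x) < π * x * (1 - x ^ 2) := by
  rcases le_or_gt 1 (x * (1 + x)) with h | h
  · have h1 : Real.sin (π * x) = Real.sin (π * (1 - x)) := by
      rw [show π * (1 - x) = π - π * x by ring, Real.sin_pi_sub]
    have h2 : Real.sin (π * (1 - x)) < π * (1 - x) :=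
      Real.sin_lt (mul_pos Real.pi_pos (by linarith))
    have h3 : π * (1 - x) ≤ π * x * (1 - x ^ 2) := by
      have h4 : π * (1 - x) * 1 ≤ π * (1 - x) * (x * (1 + x)) :=
        mul_le_mul_of_nonneg_left h (mul_nonneg Real.pi_pos.le (by linarith))
      nlinarith [h4]
    linarith [h1 ▸ h2]
  · have hx62 : x ^ 2 < 2 / 3 := by nlinarith
    have hq := sin_le_quintic (t := π * x) (by positivity)
    have hpi1 : π < 3.15 := by linarith [Real.pi_lt_d2]
    have hpi2 : 3.14 < π := by linarith [Real.pi_gt_d6]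
    have key : (π * x) ^ 5 / 120 < π ^ 3 * x ^ 3 / 6 - π * x ^ 3 := by
      have h1 : (π * x) ^ 5 / 120 = (π ^ 4 * x ^ 2 / 120) * (π * x ^ 3) := by ring
      have h2 : π ^ 3 * x ^ 3 / 6 - π * x ^ 3 = (π ^ 2 / 6 - 1) * (π * x ^ 3) := by ring
      rw [h1, h2]
      have hp : 0 < π * x ^ 3 := by positivity
      apply mul_lt_mul_of_pos_right _ hp
      have hp2' : π ^ 2 < 9.9225 := by
        nlinarith [mul_pos (sub_pos.2 hpi1) (show (0:ℝ) < 3.15 + π by positivity)]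
      have hp4 : π ^ 4 < 99 := by
        nlinarith [mul_lt_mul_of_pos_left hp2' (show (0:ℝ) < π ^ 2 by positivity), hp2',
          sq_nonneg π]
      have hp2 : (9.85:ℝ) < π ^ 2 := by
        nlinarith [mul_pos (sub_pos.2 hpi2) (show (0:ℝ) < π + 3.14 by positivity)]
      have := mul_lt_mul_of_pos_left hx62 (show (0:ℝ) < π ^ 4 by positivity)
      nlinarith [this, hp4, hp2]
    calc Real.sin (π * x) ≤ π * x - (π * x) ^ 3 / 6 + (π * x) ^ 5 / 120 := hq
      _ < π * x * (1 - x ^ 2) := by nlinarith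

theorem gamma_prod_gt_one {x : ℝ} (hx : 0 < x) (hx1 : x ≤ 1) :
    1 < Real.Gamma (2 - x) * Real.Gamma (2 + x) := by
  rcases eq_or_lt_of_le hx1 with rfl | hx1
  · rw [show (2:ℝ) - 1 = 1 by norm_num, show (2:ℝ) + 1 = ((2:ℕ) : ℝ) + 1 by norm_num,
      Real.Gamma_one, Real.Gamma_nat_eq_factorial]
    norm_num
  · have hs : Real.sin (π * x) > 0 := Real.sin_pos_of_pos_of_lt_pi (by positivity)
      (by nlinarith [Real.pi_pos])
    have hrefl : Real.Gamma x * Real.Gamma (1 - x) = π / Real.sin (π * x) :=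
      Real.Gamma_mul_Gamma_one_sub x
    have e1 : Real.Gamma (2 + x) = (1 + x) * (x * Real.Gamma x) := by
      rw [show (2:ℝ) + x = (1 + x) + 1 by ring, Real.Gamma_add_one (by positivity),
        show (1:ℝ) + x = x + 1 by ring, Real.Gamma_add_one hx.ne']
    have e2 : Real.Gamma (2 - x) = (1 - x) * Real.Gamma (1 - x) := by
      rw [show (2:ℝ) - x = (1 - x) + 1 by ring, Real.Gamma_add_one (by linarith : (1:ℝ) - x ≠ 0)]
    rw [e1, e2]
    have e3 : (1 - x) * Real.Gamma (1 - x) * ((1 + x) * (x * Real.Gamma x))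
        = (x * (1 - x ^ 2)) * (Real.Gamma x * Real.Gamma (1 - x)) := by ring
    rw [e3, hrefl]
    rw [← mul_div_assoc, lt_div_iff₀ hs, one_mul]
    exact lt_of_lt_of_eq (sin_pi_mul_lt hx hx1) (by ring)

end Aux

theorem sigma_matrix_posDef (l : ℝ) (hl : 1 ≤ l) :
    let β : ℝ := 1 + 1 / l
    0 < β * trigamma β - 1 ∧
    0 < 4 * (1 + l) - 4 * l / (Real.Gamma (3 - β) * Real.Gamma β) ∧
    (!![4 * (1 + l) - 4 * l / (Real.Gamma (3 - β) * Real.Gamma β), 0;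
        0, (β * trigamma β - 1) / l ^ 3] : Matrix (Fin 2) (Fin 2) ℝ).PosDef := by
  intro β
  have hl0 : (0:ℝ) < l := by linarith
  set x : ℝ := 1 / l with hxdef
  have hx0 : 0 < x := by positivity
  have hx1 : x ≤ 1 := by rw [hxdef]; rw [div_le_one hl0]; linarith
  have hβ1 : 1 < β := by simp only [β]; linarith
  have hβ2 : β ≤ 2 := by simp only [β]; linarith
  -- first component
  have H1 : 0 < β * trigamma β - 1 := part1 hβ1 hβ2
  -- second component
  have hprod := gamma_prod_gt_one hx0 hx1
  have hβx : β = 1 + x := rfl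
  have h3β : (3:ℝ) - β = 2 - x := by rw [hβx]; ring
  have hgad : Real.Gamma (2 + x) = (1 + x) * Real.Gamma (1 + x) := by
    rw [show (2:ℝ) + x = (1 + x) + 1 by ring, Real.Gamma_add_one (by positivity)]
  have hP : Real.Gamma (3 - β) * Real.Gamma β = Real.Gamma (2 - x) * Real.Gamma (1 + x) := by
    rw [h3β, hβx]
  have hPgt : 1 / (1 + x) < Real.Gamma (3 - β) * Real.Gamma β := by
    rw [hP, div_lt_iff₀ (by positivity : (0:ℝ) < 1 + x)]
    calc (1:ℝ) < Real.Gamma (2 - x) * Real.Gamma (2 + x) := hprod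
      _ = Real.Gamma (2 - x) * Real.Gamma (1 + x) * (1 + x) := by rw [hgad]; ring
  have hPpos : 0 < Real.Gamma (3 - β) * Real.Gamma β := lt_trans (by positivity) hPgt
  have H2 : 0 < 4 * (1 + l) - 4 * l / (Real.Gamma (3 - β) * Real.Gamma β) := by
    rw [sub_pos, div_lt_iff₀ hPpos]
    have h1 : 4 * l = (4 * (1 + l)) * (1 / (1 + x)) := by
      rw [hxdef]
      field_simp
      ring
    rw [h1]
    exact mul_lt_mul_of_pos_left hPgt (by positivity)
  refine ⟨H1, H2, ?_⟩
  -- positive definiteness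
  have hdiag : (!![4 * (1 + l) - 4 * l / (Real.Gamma (3 - β) * Real.Gamma β), 0;
        0, (β * trigamma β - 1) / l ^ 3] : Matrix (Fin 2) (Fin 2) ℝ)
      = Matrix.diagonal ![4 * (1 + l) - 4 * l / (Real.Gamma (3 - β) * Real.Gamma β),
          (β * trigamma β - 1) / l ^ 3] := by
    ext i j
    fin_cases i <;> fin_cases j <;>
      simp [Matrix.diagonal]
  rw [hdiag]
  refine Matrix.PosDef.diagonal ?_
  intro i
  fin_cases i
  · simpa using H2
  · simpa using div_pos H1 (by positivity)
end

section
/- Let X₁, X₂, ... be i.i.d. real random variables and ξ̂ₙ = ξ̂ₙ(X₁,...,Xₙ) estimators in ℝ^d with ξ̂ₙ → ξ almost surely. Suppose U : ℝ × ℝ^d → ℝ is measurable and there is δ > 0 such that (A.1) for all x, t ↦ U(x,t) is continuous on the closed ball B_δ[ξ], and (A.2) there exists K : ℝ → ℝ with |U(x,t)| ≤ K(x) for all (x,t) ∈ ℝ × B_δ[ξ] and E|K(X₁)| < ∞. Let ρₙ = ‖ξ̂ₙ - ξ‖₂ and Ū(t) = E[U(X₁,t)]. Then almost surely, limsup_{n→∞}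 sup_{t ∈ B_{ρₙ}[ξ]} |(1/n)∑_{i=1}^n U(Xᵢ,t) - Ū(ξ)| = 0. -/
open MeasureTheory Filter
open scoped ProbabilityTheory Topology

set_option maxHeartbeats 1000000 in
/-- Uniform law of large numbers over shrinking random balls around `ξ`
(Le Cam-type ULLN, Lemma 1 in the paper). -/
theorem ulln_over_shrinking_balls
    {Ω : Type*} [MeasureSpace Ω] [IsProbabilityMeasure (ℙ : Measure Ω)]
    {d : ℕ} (X : ℕ → Ω → ℝ) (hXmeas : ∀ i, Measurable (X i))
    (hindep : ProbabilityTheory.iIndepFun X (ℙ : Measure Ω))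
    (hident : ∀ i, Measure.map (X i) ℙ = Measure.map (X 0) (ℙ : Measure Ω))
    (ξhat : ℕ → Ω → EuclideanSpace ℝ (Fin d)) (ξ : EuclideanSpace ℝ (Fin d))
    (hcons : ∀ᵐ ω ∂(ℙ : Measure Ω), Tendsto (fun n => ξhat n ω) atTop (nhds ξ))
    (U : ℝ → EuclideanSpace ℝ (Fin d) → ℝ)
    (hUmeas : Measurable (Function.uncurry U))
    (δ : ℝ) (hδ : 0 < δ)
    (hcont : ∀ x : ℝ, ContinuousOn (U x) (Metric.closedBall ξ δ))
    (K : ℝ → ℝ)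
    (hbound : ∀ x : ℝ, ∀ t ∈ Metric.closedBall ξ δ, |U x t| ≤ K x)
    (hKint : Integrable (fun ω => K (X 0 ω)) (ℙ : Measure Ω)) :
    ∀ᵐ ω ∂(ℙ : Measure Ω),
      Filter.limsup
        (fun n : ℕ =>
          sSup ((fun t => |(n : ℝ)⁻¹ * ∑ i ∈ Finset.range n, U (X i ω) t
              - ∫ ω', U (X 0 ω') ξ ∂(ℙ : Measure Ω)|) ''
            Metric.closedBall ξ (dist (ξhat n ω) ξ)))
        atTop = 0 := by
  classical
  have hξmem : ξ ∈ Metric.closedBall ξ δ := Metric.mem_closedBall_self hδ.le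
  set f : ℝ → EuclideanSpace ℝ (Fin d) → ℝ := fun x t => |U x t - U x ξ| with hfdef
  set h : ℝ → ℝ → ℝ := fun ε x => sSup (f x '' Metric.closedBall ξ ε) with hhdef
  -- continuity of f x on the big ball
  have hfc : ∀ x, ContinuousOn (f x) (Metric.closedBall ξ δ) :=
    fun x => ((hcont x).sub continuousOn_const).abs
  -- bound on f
  have hfb : ∀ x, ∀ t ∈ Metric.closedBall ξ δ, f x t ≤ 2 * K x := by
    intro x t ht
    calc |U x t - U x ξ| ≤ |U x t| + |U x ξ| := abs_sub _ _
    _ ≤ K x + K x := add_le_add (hbound x t ht) (hbound x ξ hξmem)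
    _ = 2 * K x := by ring
  have hbdd : ∀ x, ∀ ε ≤ δ, BddAbove (f x '' Metric.closedBall ξ ε) := by
    intro x ε hεδ
    refine ⟨2 * K x, ?_⟩
    rintro y ⟨t, ht, rfl⟩
    exact hfb x t (Metric.closedBall_subset_closedBall hεδ ht)
  have hne : ∀ ε : ℝ, 0 ≤ ε → (Metric.closedBall ξ ε).Nonempty :=
    fun ε hε => ⟨ξ, Metric.mem_closedBall_self hε⟩
  have hle_h : ∀ x, ∀ ε ≤ δ, ∀ t ∈ Metric.closedBall ξ ε, f x t ≤ h ε x :=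
    fun x ε hεδ t ht => le_csSup (hbdd x ε hεδ) (Set.mem_image_of_mem _ ht)
  have h_nonneg : ∀ x, ∀ ε, 0 ≤ ε → ε ≤ δ → 0 ≤ h ε x := by
    intro x ε hε0 hεδ
    have := hle_h x ε hεδ ξ (Metric.mem_closedBall_self hε0)
    simpa [hfdef] using this
  have h_le : ∀ x, ∀ ε, 0 ≤ ε → ε ≤ δ → h ε x ≤ 2 * K x := by
    intro x ε hε0 hεδ
    refine csSup_le ((hne ε hε0).image _) ?_
    rintro y ⟨t, ht, rfl⟩
    exact hfb x t (Metric.closedBall_subset_closedBall hεδ ht)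
  -- measurability of h ε
  have h_meas : ∀ ε, 0 ≤ ε → ε ≤ δ → Measurable (h ε) := by
    intro ε hε0 hεδ
    obtain ⟨D, hDsub, hDcount, hDdense⟩ :=
      EMetric.subset_countable_closure_of_compact (isCompact_closedBall ξ ε)
    have hDδ : D ⊆ Metric.closedBall ξ δ :=
      hDsub.trans (Metric.closedBall_subset_closedBall hεδ)
    have hDne : D.Nonempty := by
      by_contra hc
      rw [Set.not_nonempty_iff_eq_empty] at hc
      have := hDdense (Metric.mem_closedBall_self hε0)
      simp [hc] at this
    obtain ⟨u, hu⟩ := Set.Countable.exists_eq_range hDcount hDne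
    have key : ∀ x, h ε x = ⨆ n, f x (u n) := by
      intro x
      have hbD : BddAbove (f x '' D) :=
        (hbdd x ε hεδ).mono (Set.image_mono hDsub)
      have h1 : sSup (f x '' D) ≤ h ε x :=
        csSup_le_csSup (hbdd x ε hεδ) (hDne.image _) (Set.image_mono hDsub)
      have h2 : h ε x ≤ sSup (f x '' D) := by
        refine csSup_le ((hne ε hε0).image _) ?_
        rintro y ⟨t, ht, rfl⟩
        have hclos : f x t ∈ closure (f x '' D) :=
          ContinuousWithinAt.mem_closure_image
            (((hfc x).continuousWithinAt
              (Metric.closedBall_subset_closedBall hεδ ht)).mono hDδ) (hDdense ht)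
        have hsub : closure (f x '' D) ⊆ Set.Iic (sSup (f x '' D)) :=
          closure_minimal (fun y hy => le_csSup hbD hy) isClosed_Iic
        exact hsub hclos
      have himg : f x '' D = Set.range (fun n => f x (u n)) := by
        rw [hu, ← Set.range_comp]
        rfl
      have : h ε x = sSup (f x '' D) := le_antisymm h2 h1
      rw [this, himg, iSup]
    have hrw : h ε = fun x => ⨆ n, f x (u n) := funext key
    rw [hrw]
    refine Measurable.iSup (fun n => ?_)
    have m1 : Measurable (fun x => U x (u n)) :=
      hUmeas.comp (measurable_id.prodMk measurable_const)
    have m2 : Measurable (fun x => U x ξ) :=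
      hUmeas.comp (measurable_id.prodMk measurable_const)
    exact (m1.sub m2).abs
  -- the shrinking sequence of radii
  set εs : ℕ → ℝ := fun m => δ / (m + 1) with hεsdef
  have hεs_pos : ∀ m, 0 < εs m := fun m => div_pos hδ (by positivity)
  have hεs_le : ∀ m, εs m ≤ δ := by
    intro m
    rw [hεsdef]
    rw [div_le_iff₀ (by positivity : (0:ℝ) < (m:ℝ) + 1)]
    nlinarith [hδ.le, Nat.cast_nonneg (α := ℝ) m]
  have hεs_tendsto : Tendsto εs atTop (𝓝 0) := by
    have : Tendsto (fun m : ℕ => (m : ℝ) + 1) atTop atTop :=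
      tendsto_natCast_atTop_atTop.atTop_add tendsto_const_nhds
    exact tendsto_const_nhds.div_atTop this
  -- pointwise convergence h (εs m) x → 0
  have h_small : ∀ x, Tendsto (fun m => h (εs m) x) atTop (𝓝 0) := by
    intro x
    rw [tendsto_order]
    constructor
    · intro c hc
      exact Eventually.of_forall fun m =>
        lt_of_lt_of_le hc (h_nonneg x (εs m) (hεs_pos m).le (hεs_le m))
    · intro c hc
      have hcw : ContinuousWithinAt (U x) (Metric.closedBall ξ δ) ξ :=
        (hcont x).continuousWithinAt hξmem
      rw [Metric.continuousWithinAt_iff] at hcw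
      obtain ⟨r, hr, hball⟩ := hcw (c / 2) (by linarith)
      have hev : ∀ᶠ m in atTop, εs m < r := hεs_tendsto.eventually (gt_mem_nhds hr)
      filter_upwards [hev] with m hm
      have : h (εs m) x ≤ c / 2 := by
        refine csSup_le ((hne (εs m) (hεs_pos m).le).image _) ?_
        rintro y ⟨t, ht, rfl⟩
        have htδ : t ∈ Metric.closedBall ξ δ :=
          Metric.closedBall_subset_closedBall (hεs_le m) ht
        have hdist : dist t ξ < r := lt_of_le_of_lt (Metric.mem_closedBall.1 ht) hm
        have := hball htδ hdist
        rw [Real.dist_eq] at this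
        exact this.le
      linarith
  -- identical distribution helper
  have hid : ∀ i, ProbabilityTheory.IdentDistrib (X i) (X 0) ℙ ℙ :=
    fun i => ⟨(hXmeas i).aemeasurable, (hXmeas 0).aemeasurable, hident i⟩
  have m_Uξ : Measurable (fun x => U x ξ) :=
    hUmeas.comp (measurable_id.prodMk measurable_const)
  -- SLLN for U (X i) ξ
  have slln0 : ∀ᵐ ω ∂(ℙ : Measure Ω),
      Tendsto (fun n : ℕ => (n : ℝ)⁻¹ • ∑ i ∈ Finset.range n, U (X i ω) ξ) atTop
        (𝓝 (∫ ω', U (X 0 ω') ξ ∂(ℙ : Measure Ω))) := by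
    refine ProbabilityTheory.strong_law_ae (fun i ω => U (X i ω) ξ) ?_ ?_ ?_
    · refine Integrable.mono' hKint (m_Uξ.comp (hXmeas 0)).aestronglyMeasurable ?_
      exact Eventually.of_forall fun ω => by
        simpa [Real.norm_eq_abs] using hbound (X 0 ω) ξ hξmem
    · exact fun i j hij => (hindep.indepFun hij).comp m_Uξ m_Uξ
    · exact fun i => (hid i).comp m_Uξ
  -- integrability of h (εs m) ∘ X 0, SLLN for it
  have h_meas' : ∀ m, Measurable (h (εs m)) :=
    fun m => h_meas (εs m) (hεs_pos m).le (hεs_le m)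
  have h_int : ∀ m, Integrable (fun ω => h (εs m) (X 0 ω)) ℙ := by
    intro m
    refine Integrable.mono' (hKint.const_mul 2)
      ((h_meas' m).comp (hXmeas 0)).aestronglyMeasurable ?_
    refine Eventually.of_forall fun ω => ?_
    rw [Real.norm_eq_abs,
      abs_of_nonneg (h_nonneg (X 0 ω) (εs m) (hεs_pos m).le (hεs_le m))]
    exact h_le (X 0 ω) (εs m) (hεs_pos m).le (hεs_le m)
  have slln_h : ∀ m, ∀ᵐ ω ∂(ℙ : Measure Ω),
      Tendsto (fun n : ℕ => (n : ℝ)⁻¹ • ∑ i ∈ Finset.range n, h (εs m) (X i ω)) atTop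
        (𝓝 (∫ ω', h (εs m) (X 0 ω') ∂(ℙ : Measure Ω))) := by
    intro m
    refine ProbabilityTheory.strong_law_ae (fun i ω => h (εs m) (X i ω)) (h_int m) ?_ ?_
    · exact fun i j hij => (hindep.indepFun hij).comp (h_meas' m) (h_meas' m)
    · exact fun i => (hid i).comp (h_meas' m)
  -- convergence of the integrals of h (εs m) to 0
  have hI0 : Tendsto (fun m => ∫ ω, h (εs m) (X 0 ω) ∂(ℙ : Measure Ω)) atTop (𝓝 0) := by
    have := MeasureTheory.tendsto_integral_of_dominated_convergence
      (F := fun m ω => h (εs m) (X 0 ω)) (f := fun _ => (0 : ℝ))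
      (bound := fun ω => 2 * K (X 0 ω))
      (fun m => ((h_meas' m).comp (hXmeas 0)).aestronglyMeasurable)
      (hKint.const_mul 2)
      (fun m => Eventually.of_forall fun ω => by
        rw [Real.norm_eq_abs,
          abs_of_nonneg (h_nonneg (X 0 ω) (εs m) (hεs_pos m).le (hεs_le m))]
        exact h_le (X 0 ω) (εs m) (hεs_pos m).le (hεs_le m))
      (Eventually.of_forall fun ω => h_small (X 0 ω))
    simpa using this
  -- main a.e. argument
  filter_upwards [hcons, slln0, ae_all_iff.2 slln_h] with ω hω hω0 hωh
  set M : ℝ := ∫ ω', U (X 0 ω') ξ ∂(ℙ : Measure Ω) with hMdef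
  set ρ : ℕ → ℝ := fun n => dist (ξhat n ω) ξ with hρdef
  have hρ0 : Tendsto ρ atTop (𝓝 0) := tendsto_iff_dist_tendsto_zero.1 hω
  set a : ℕ → ℝ := fun n => |(n : ℝ)⁻¹ * ∑ i ∈ Finset.range n, U (X i ω) ξ - M| with hadef
  have ha0 : Tendsto a atTop (𝓝 0) := by
    have := tendsto_iff_norm_sub_tendsto_zero.1 hω0
    simpa [hadef, Real.norm_eq_abs, smul_eq_mul] using this
  set b : ℕ → ℕ → ℝ :=
    fun m n => (n : ℝ)⁻¹ * ∑ i ∈ Finset.range n, h (εs m) (X i ω) with hbdef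
  have hb : ∀ m, Tendsto (fun n => b m n) atTop
      (𝓝 (∫ ω', h (εs m) (X 0 ω') ∂(ℙ : Measure Ω))) := by
    intro m
    simpa [hbdef, smul_eq_mul] using hωh m
  -- key pointwise bound
  have KB : ∀ m n, ρ n ≤ εs m → ∀ y ∈
      ((fun t => |(n : ℝ)⁻¹ * ∑ i ∈ Finset.range n, U (X i ω) t - M|) ''
        Metric.closedBall ξ (ρ n)), y ≤ a n + b m n := by
    intro m n hρn y hy
    obtain ⟨t, ht, rfl⟩ := hy
    have htm : t ∈ Metric.closedBall ξ (εs m) :=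
      Metric.closedBall_subset_closedBall hρn ht
    have step1 : |(n : ℝ)⁻¹ * ∑ i ∈ Finset.range n, U (X i ω) t - M|
        ≤ |(n : ℝ)⁻¹ * ∑ i ∈ Finset.range n, U (X i ω) t
            - (n : ℝ)⁻¹ * ∑ i ∈ Finset.range n, U (X i ω) ξ| + a n := by
      rw [hadef]
      have := abs_add_le ((n : ℝ)⁻¹ * ∑ i ∈ Finset.range n, U (X i ω) t
          - (n : ℝ)⁻¹ * ∑ i ∈ Finset.range n, U (X i ω) ξ)
        ((n : ℝ)⁻¹ * ∑ i ∈ Finset.range n, U (X i ω) ξ - M)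
      simpa using this
    have step2 : |(n : ℝ)⁻¹ * ∑ i ∈ Finset.range n, U (X i ω) t
        - (n : ℝ)⁻¹ * ∑ i ∈ Finset.range n, U (X i ω) ξ| ≤ b m n := by
      rw [← mul_sub, abs_mul, abs_of_nonneg (by positivity : (0:ℝ) ≤ (n : ℝ)⁻¹),
        ← Finset.sum_sub_distrib]
      refine mul_le_mul_of_nonneg_left ?_ (by positivity)
      calc |∑ i ∈ Finset.range n, (U (X i ω) t - U (X i ω) ξ)|
          ≤ ∑ i ∈ Finset.range n, |U (X i ω) t - U (X i ω) ξ| :=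
            Finset.abs_sum_le_sum_abs _ _
        _ ≤ ∑ i ∈ Finset.range n, h (εs m) (X i ω) :=
            Finset.sum_le_sum fun i _ => hle_h (X i ω) (εs m) (hεs_le m) t htm
    calc |(n : ℝ)⁻¹ * ∑ i ∈ Finset.range n, U (X i ω) t - M|
        ≤ |(n : ℝ)⁻¹ * ∑ i ∈ Finset.range n, U (X i ω) t
            - (n : ℝ)⁻¹ * ∑ i ∈ Finset.range n, U (X i ω) ξ| + a n := step1
      _ ≤ b m n + a n := add_le_add_left step2 _
      _ = a n + b m n := add_comm _ _
  -- conclude via a Tendsto statement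
  have main : Tendsto
      (fun n : ℕ =>
        sSup ((fun t => |(n : ℝ)⁻¹ * ∑ i ∈ Finset.range n, U (X i ω) t - M|) ''
          Metric.closedBall ξ (ρ n))) atTop (𝓝 0) := by
    rw [tendsto_order]
    constructor
    · intro c hc
      have hev : ∀ᶠ n in atTop, ρ n < δ := hρ0.eventually (gt_mem_nhds hδ)
      filter_upwards [hev] with n hρn
      have hbA : BddAbove ((fun t => |(n : ℝ)⁻¹ * ∑ i ∈ Finset.range n, U (X i ω) t - M|) ''
          Metric.closedBall ξ (ρ n)) := by
        refine ⟨(n : ℝ)⁻¹ * ∑ i ∈ Finset.range n, K (X i ω) + |M|, ?_⟩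
        rintro y ⟨t, ht, rfl⟩
        have htδ : t ∈ Metric.closedBall ξ δ :=
          Metric.closedBall_subset_closedBall hρn.le ht
        calc |(n : ℝ)⁻¹ * ∑ i ∈ Finset.range n, U (X i ω) t - M|
            ≤ |(n : ℝ)⁻¹ * ∑ i ∈ Finset.range n, U (X i ω) t| + |M| := abs_sub _ _
          _ ≤ (n : ℝ)⁻¹ * ∑ i ∈ Finset.range n, K (X i ω) + |M| := by
              gcongr ?_ + _
              rw [abs_mul, abs_of_nonneg (by positivity : (0:ℝ) ≤ (n : ℝ)⁻¹)]
              refine mul_le_mul_of_nonneg_left ?_ (by positivity)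
              exact (Finset.abs_sum_le_sum_abs _ _).trans
                (Finset.sum_le_sum fun i _ => hbound (X i ω) t htδ)
      have hmem : |(n : ℝ)⁻¹ * ∑ i ∈ Finset.range n, U (X i ω) ξ - M| ∈
          ((fun t => |(n : ℝ)⁻¹ * ∑ i ∈ Finset.range n, U (X i ω) t - M|) ''
            Metric.closedBall ξ (ρ n)) :=
        Set.mem_image_of_mem _ (Metric.mem_closedBall_self dist_nonneg)
      have := le_csSup hbA hmem
      have h0 : (0:ℝ) ≤ |(n : ℝ)⁻¹ * ∑ i ∈ Finset.range n, U (X i ω) ξ - M| := abs_nonneg _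
      linarith
    · intro c hc
      obtain ⟨m, hm⟩ :=
        ((tendsto_order.1 hI0).2 (c / 4) (by linarith)).exists
      have E1 : ∀ᶠ n in atTop, ρ n < εs m := hρ0.eventually (gt_mem_nhds (hεs_pos m))
      have E2 : ∀ᶠ n in atTop, a n < c / 4 := (tendsto_order.1 ha0).2 _ (by linarith)
      have E3 : ∀ᶠ n in atTop, b m n < c / 2 :=
        (tendsto_order.1 (hb m)).2 _ (by linarith)
      filter_upwards [E1, E2, E3] with n h1 h2 h3
      have hsup_le : sSup ((fun t => |(n : ℝ)⁻¹ * ∑ i ∈ Finset.range n, U (X i ω) t - M|) ''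
          Metric.closedBall ξ (ρ n)) ≤ a n + b m n :=
        csSup_le (((hne (ρ n) dist_nonneg).image _)) (KB m n h1.le)
      linarith
  exact main.limsup_eq
end
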